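/- Let k ≥ 1, s ≥ 1 and ℓ ≥ (s−1)·k be integers. Let G = (V,E) be an s-uniform (k,ℓ)-sparse hypergraph. Then G is critical: if H = (V,F) is a (k,ℓ)-sparse hypergraph representing G, i.e., there is a bijection f from the multiset E to the multiset F with f(e) ⊆ e for every e ∈ E, then f(e) = e for every e ∈ E (so H = G). -/
import Mathlib


/-- The number of edges of the multiset `E` spanned by the vertex set `W`. -/
def spanCount {V : Type*} [DecidableEq V] (E : Multiset (Finset V)) (W : Finset V) : ℕ :=
  (E.filter fun e => e ⊆ W).card

/-- A hypergraph with edge multiset `E` is `(k,ℓ)`-sparse if every vertex subset spanning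
at least one edge spans at most `k|W| - ℓ` edges. -/
def Sparse {V : Type*} [DecidableEq V] (k l : ℕ) (E : Multiset (Finset V)) : Prop :=
  ∀ W : Finset V, 1 ≤ spanCount E W → spanCount E W + l ≤ k * W.card

/-- Critical representations: for `ℓ ≥ (s-1)·k`, every `s`-uniform `(k,ℓ)`-sparse
hypergraph `G = (V,E)` is critical.  A representation of `G` by a `(k,ℓ)`-sparse
hypergraph `H = (V,F)` is encoded by a multiset `R` of pairs whose first components
give `E`, whose second components give `F`, and with each second component contained in
the corresponding first component; criticality says every such representation is `G`
itself. -/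
theorem stmt_18 {V : Type*} [DecidableEq V] (k s l : ℕ) (hk : 1 ≤ k) (hs : 1 ≤ s)
    (hl : (s - 1) * k ≤ l) (E : Multiset (Finset V)) (hunif : ∀ e ∈ E, e.card = s)
    (hsp : Sparse k l E)
    (F : Multiset (Finset V)) (hFne : ∀ e ∈ F, e.Nonempty) (hFsp : Sparse k l F)
    (R : Multiset (Finset V × Finset V))
    (hR₁ : R.map Prod.fst = E) (hR₂ : R.map Prod.snd = F)
    (hsub : ∀ p ∈ R, p.2 ⊆ p.1) :
    (∀ p ∈ R, p.2 = p.1) ∧ F = E := by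
  have key : ∀ p ∈ R, p.2 = p.1 := by
    intro p hp
    have h1 : p.1 ∈ E := by rw [← hR₁]; exact Multiset.mem_map_of_mem _ hp
    have h2 : p.2 ∈ F := by rw [← hR₂]; exact Multiset.mem_map_of_mem _ hp
    have hcard1 : p.1.card = s := hunif _ h1
    have hsubp := hsub p hp
    -- it suffices that card p.2 ≥ s
    have hge : s ≤ p.2.card := by
      by_contra hlt
      push_neg at hlt
      have hle : p.2.card ≤ s - 1 := Nat.le_sub_one_of_lt hlt
      have hspan : 1 ≤ spanCount F p.2 := by
        rw [spanCount]
        exact Multiset.card_pos_iff_exists_mem.mpr ⟨p.2, Multiset.mem_filter.mpr ⟨h2, subset_rfl⟩⟩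
      have := hFsp p.2 hspan
      have hk2 : k * p.2.card ≤ k * (s - 1) := Nat.mul_le_mul_left k hle
      have hcomm : k * (s - 1) = (s - 1) * k := Nat.mul_comm _ _
      omega
    exact Finset.eq_of_subset_of_card_le hsubp (hcard1 ▸ hge)
  refine ⟨key, ?_⟩
  rw [← hR₂, ← hR₁]
  exact Multiset.map_congr rfl key
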